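/- Let $V$ and $\mathfrak{a}$ be finite-dimensional vector spaces over $\mathbb{Q}$, and let $\varphi^1_1,\dots,\varphi^1_{k_1}, \varphi^2_1,\dots,\varphi^2_{k_2} \in \mathfrak{a}^*$ and $\chi^1_1,\dots,\chi^1_{k_1}, \chi^2_1,\dots,\chi^2_{k_2} \in V^*$. For $l=1,2$ and $v \in V \otimes_{\mathbb{Q}} \mathbb{R}$ define the polyhedron $P^l(v) = \{\lambda \in \mathfrak{a} \otimes \mathbb{R} \mid \langle \varphi^l_i, \lambda\rangle \geq -\chi^l_i(v) \text{ for } i = 1,\dots,k_l\}$ (functionals extended by scalars). Suppose there exists $v \in V \otimes \mathbb{R}$ such that $P^1(v) = P^2(v)$ and this set is a polytope of dimension equal to $\dim \mathfrak{a}$. Then for every neighborhood $O$ of $v$ in $V \otimes \mathbb{R}$ there exists a rational point $v' \in O \cap V$ with $P^1(v') = P^2(v')$. -/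

import Mathlib

open Finset

/-- Dot product of a rational coefficient vector with a real vector. -/
def dotq {d : ℕ} (a : Fin d → ℚ) (x : Fin d → ℝ) : ℝ := ∑ j, (a j : ℝ) * x j

lemma dotq_smul {d : ℕ} (q : ℚ) (a : Fin d → ℚ) (x : Fin d → ℝ) :
    dotq (q • a) x = (q : ℝ) * dotq a x := by
  simp [dotq, Finset.mul_sum, mul_assoc]

lemma dotq_sum {d : ℕ} {ι : Type*} (s : Finset ι) (f : ι → Fin d → ℚ) (x : Fin d → ℝ) :
    dotq (∑ i ∈ s, f i) x = ∑ i ∈ s, dotq (f i) x := by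
  simp [dotq, Finset.sum_mul]
  rw [Finset.sum_comm]

lemma dotq_neg {d : ℕ} (a : Fin d → ℚ) (x : Fin d → ℝ) :
    dotq (-a) x = -dotq a x := by
  simp [dotq]

/-- `hld s t` means `t ≤ 0` when `s = true` and `t < 0` when `s = false`. -/
def hld (s : Bool) (t : ℝ) : Prop := if s then t ≤ 0 else t < 0

lemma between {ι κ : Type} [Fintype ι] [Fintype κ] (l : ι → ℝ) (u : κ → ℝ)
    (sl : ι → Bool) (su : κ → Bool)
    (h : ∀ i j, if sl i && su j then l i ≤ u j else l i < u j) :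
    ∃ y : ℝ, (∀ i, if sl i then l i ≤ y else l i < y) ∧
      (∀ j, if su j then y ≤ u j else y < u j) := by
  rcases isEmpty_or_nonempty ι with hι | hι
  · rcases isEmpty_or_nonempty κ with hκ | hκ
    · exact ⟨0, fun i => isEmptyElim i, fun j => isEmptyElim j⟩
    · refine ⟨(univ.inf' univ_nonempty u) - 1, fun i => isEmptyElim i, fun j => ?_⟩
      have h1 : univ.inf' univ_nonempty u ≤ u j := Finset.inf'_le u (mem_univ j)
      cases su j
      · rw [if_neg Bool.false_ne_true]; linarith
      · rw [if_pos rfl]; linarith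
  · rcases isEmpty_or_nonempty κ with hκ | hκ
    · refine ⟨(univ.sup' univ_nonempty l) + 1, fun i => ?_, fun j => isEmptyElim j⟩
      have h1 : l i ≤ univ.sup' univ_nonempty l := Finset.le_sup' l (mem_univ i)
      cases sl i
      · rw [if_neg Bool.false_ne_true]; linarith
      · rw [if_pos rfl]; linarith
    · set L := univ.sup' univ_nonempty l with hL
      set U := univ.inf' univ_nonempty u with hU
      obtain ⟨i0, -, hi0⟩ := Finset.exists_mem_eq_sup' univ_nonempty l
      obtain ⟨j0, -, hj0⟩ := Finset.exists_mem_eq_inf' univ_nonempty u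
      have hLU : L ≤ U := by
        have H := h i0 j0
        rw [hL, hU, hi0, hj0]
        split at H
        · exact H
        · exact le_of_lt H
      refine ⟨(L + U) / 2, fun i => ?_, fun j => ?_⟩
      · have hle : l i ≤ L := Finset.le_sup' l (mem_univ i)
        cases hsl : sl i with
        | true => rw [if_pos rfl]; linarith
        | false =>
          have H := h i j0
          rw [hsl] at H
          simp only [Bool.false_and, if_neg Bool.false_ne_true] at H
          have hj0' : u j0 = U := by rw [hU, hj0]
          simp only [if_neg Bool.false_ne_true]
          rw [hj0'] at H
          linarith
      · have hle : U ≤ u j := Finset.inf'_le u (mem_univ j)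
        cases hsu : su j with
        | true => rw [if_pos rfl]; linarith
        | false =>
          have H2 := h i0 j
          rw [hsu] at H2
          simp only [Bool.and_false, if_neg Bool.false_ne_true] at H2
          have hi0' : l i0 = L := by rw [hL, hi0]
          simp only [if_neg Bool.false_ne_true]
          rw [hi0'] at H2
          linarith

lemma not_hld {s : Bool} {t : ℝ} : ¬ hld s t ↔ (if s then 0 < t else 0 ≤ t) := by
  cases s <;> simp [hld]

lemma hld_true {t : ℝ} : hld true t ↔ t ≤ 0 := Iff.rfl
lemma hld_false {t : ℝ} : hld false t ↔ t < 0 := Iff.rfl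

lemma hld_add {s1 s2 : Bool} {t1 t2 : ℝ} (h1 : hld s1 t1) (h2 : hld s2 t2) :
    hld (s1 && s2) (t1 + t2) := by
  cases s1 <;> cases s2 <;>
    simp only [hld_true, hld_false, Bool.and_self, Bool.and_false, Bool.false_and,
      Bool.true_and] at * <;> linarith

lemma hld_smul {s : Bool} {t q : ℝ} (hq : 0 < q) (h : hld s t) : hld s (q * t) := by
  cases s
  · exact mul_neg_of_pos_of_neg hq h
  · exact mul_nonpos_of_nonneg_of_nonpos (le_of_lt hq) h

lemma hld_sub_iff {s : Bool} {a b : ℝ} :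
    hld s (a - b) ↔ (if s then a ≤ b else a < b) := by
  cases s <;> simp [hld, sub_nonpos, sub_neg]

theorem fm1 (ι : Type) [Fintype ι] (c : ι → ℚ) (s : ι → Bool) :
    ∃ (κ : Type) (_ : Fintype κ) (coef : κ → ι → ℚ) (s' : κ → Bool),
      ∀ A : ι → ℝ,
        (∃ y : ℝ, ∀ i, hld (s i) (A i + (c i : ℝ) * y)) ↔
        (∀ k, hld (s' k) (∑ i, (coef k i : ℝ) * A i)) := by
  classical
  refine ⟨{i : ι // c i = 0} ⊕ {p : ι × ι // c p.1 < 0 ∧ 0 < c p.2}, inferInstance,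
    Sum.elim
      (fun i => fun i' => if i' = i.1 then 1 else 0)
      (fun p => fun i' => (if i' = p.1.1 then (-(c p.1.1))⁻¹ else 0)
        + (if i' = p.1.2 then (c p.1.2)⁻¹ else 0)),
    Sum.elim (fun i => s i.1) (fun p => s p.1.1 && s p.1.2), fun A => ?_⟩
  have sum_inl : ∀ (i : ι), (∑ i', ((if i' = i then (1:ℚ) else 0 : ℚ) : ℝ) * A i') = A i := by
    intro i
    rw [Finset.sum_eq_single i]
    · simp
    · intro b _ hb; simp [hb]
    · intro hi; exact absurd (mem_univ i) hi
  have sum_inr : ∀ (i j : ι), c i < 0 → 0 < c j → i ≠ j →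
      (∑ i', (((if i' = i then (-(c i))⁻¹ else 0) + (if i' = j then (c j)⁻¹ else 0) : ℚ) : ℝ) * A i')
        = (-(c i : ℝ))⁻¹ * A i + ((c j : ℝ))⁻¹ * A j := by
    intro i j hi hj hij
    push_cast
    rw [Finset.sum_congr rfl (fun i' _ => add_mul _ _ (A i')), Finset.sum_add_distrib]
    congr 1
    · rw [Finset.sum_eq_single i]
      · simp
      · intro b _ hb; simp [hb]
      · intro hi'; exact absurd (mem_univ i) hi'
    · rw [Finset.sum_eq_single j]
      · simp
      · intro b _ hb; simp [hb]
      · intro hj'; exact absurd (mem_univ j) hj'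
  constructor
  · rintro ⟨y, hy⟩ k
    match k with
    | Sum.inl ⟨i, hi⟩ =>
      have := hy i
      rw [hi] at this
      simp only [Rat.cast_zero, zero_mul, add_zero] at this
      simpa [sum_inl i] using this
    | Sum.inr ⟨⟨i, j⟩, hi, hj⟩ =>
      have hij : i ≠ j := by intro h; rw [h] at hi; exact absurd hj (asymm hi)
      have hi' : ((c i : ℝ)) < 0 := by exact_mod_cast hi
      have hj' : (0:ℝ) < (c j : ℝ) := by exact_mod_cast hj
      have hinv1 : (0:ℝ) < (-(c i : ℝ))⁻¹ := inv_pos.mpr (by linarith)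
      have hinv2 : (0:ℝ) < ((c j : ℝ))⁻¹ := inv_pos.mpr hj'
      simp only [Sum.elim_inr]
      rw [sum_inr i j hi hj hij]
      have key : (-(c i : ℝ))⁻¹ * A i + ((c j : ℝ))⁻¹ * A j
          = (-(c i : ℝ))⁻¹ * (A i + (c i : ℝ) * y) + ((c j : ℝ))⁻¹ * (A j + (c j : ℝ) * y) := by
        have e1 : ((c i : ℝ))⁻¹ * (c i : ℝ) = 1 := inv_mul_cancel₀ (ne_of_lt hi')
        have e2 : ((c j : ℝ))⁻¹ * (c j : ℝ) = 1 := inv_mul_cancel₀ (ne_of_gt hj')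
        rw [inv_neg]
        linear_combination y * e1 - y * e2
      rw [key]
      exact hld_add (hld_smul hinv1 (hy i)) (hld_smul hinv2 (hy j))
  · intro h
    have hneg : ∀ (i : {i : ι // c i < 0}) (j : {j : ι // 0 < c j}),
        if s i.1 && s j.1 then A i.1 / (-(c i.1 : ℝ)) ≤ -(A j.1) / (c j.1 : ℝ)
          else A i.1 / (-(c i.1 : ℝ)) < -(A j.1) / (c j.1 : ℝ) := by
      intro ⟨i, hi⟩ ⟨j, hj⟩
      have hij : i ≠ j := by intro hh; rw [hh] at hi; exact absurd hj (asymm hi)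
      have H := h (Sum.inr ⟨⟨i, j⟩, hi, hj⟩)
      simp only [Sum.elim_inr] at H
      rw [sum_inr i j hi hj hij] at H
      have key : (-(c i : ℝ))⁻¹ * A i + ((c j : ℝ))⁻¹ * A j
          = A i / (-(c i : ℝ)) - (-(A j) / (c j : ℝ)) := by
        rw [div_eq_mul_inv, div_eq_mul_inv]
        ring
      rw [key] at H
      exact hld_sub_iff.mp H
    obtain ⟨y, hy1, hy2⟩ := between (fun i : {i : ι // c i < 0} => A i.1 / (-(c i.1 : ℝ)))
      (fun j : {j : ι // 0 < c j} => -(A j.1) / (c j.1 : ℝ))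
      (fun i => s i.1) (fun j => s j.1) hneg
    refine ⟨y, fun i => ?_⟩
    rcases lt_trichotomy (c i) 0 with hi | hi | hi
    · have hi' : ((c i : ℝ)) < 0 := by exact_mod_cast hi
      have H := hy1 ⟨i, hi⟩
      have H' : hld (s i) (A i / (-(c i : ℝ)) - y) := hld_sub_iff.mpr H
      have key : A i + (c i : ℝ) * y = (-(c i : ℝ)) * (A i / (-(c i : ℝ)) - y) := by
        have e1 : ((c i : ℝ))⁻¹ * (c i : ℝ) = 1 := inv_mul_cancel₀ (ne_of_lt hi')
        rw [div_eq_mul_inv, inv_neg]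
        linear_combination (- A i) * e1
      rw [key]
      exact hld_smul (by linarith) H'
    · have hi' : ((c i : ℝ)) = 0 := by exact_mod_cast hi
      have H := h (Sum.inl ⟨i, hi⟩)
      simp only [Sum.elim_inl] at H
      rw [sum_inl i] at H
      rw [hi', zero_mul, add_zero]
      exact H
    · have hi' : (0:ℝ) < ((c i : ℝ)) := by exact_mod_cast hi
      have H := hy2 ⟨i, hi⟩
      have H' : hld (s i) (y - -(A i) / ((c i : ℝ))) := hld_sub_iff.mpr H
      have key : A i + (c i : ℝ) * y = ((c i : ℝ)) * (y - -(A i) / ((c i : ℝ))) := by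
        have e1 : ((c i : ℝ))⁻¹ * (c i : ℝ) = 1 := inv_mul_cancel₀ (ne_of_gt hi')
        rw [div_eq_mul_inv]
        linear_combination (-(A i)) * e1
      rw [key]
      exact hld_smul hi' H'

lemma dotq_snoc {m : ℕ} (a : Fin (m+1) → ℚ) (x : Fin m → ℝ) (y : ℝ) :
    dotq a (Fin.snoc x y) = dotq (Fin.init a) x + (a (Fin.last m) : ℝ) * y := by
  rw [dotq, Fin.sum_univ_castSucc]
  simp [dotq, Fin.init]

lemma dotq_eq_init {m : ℕ} (a : Fin (m+1) → ℚ) (lam : Fin (m+1) → ℝ) :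
    dotq a lam = dotq (Fin.init a) (Fin.init lam) + (a (Fin.last m) : ℝ) * lam (Fin.last m) := by
  conv_lhs => rw [← Fin.snoc_init_self lam]
  rw [dotq_snoc]

lemma dotq_combo {d : ℕ} {ι : Type} [Fintype ι] (co : ι → ℚ) (f : ι → Fin d → ℚ)
    (x : Fin d → ℝ) :
    (∑ i, (co i : ℝ) * dotq (f i) x) = dotq (∑ i, co i • f i) x := by
  rw [dotq_sum]
  exact Finset.sum_congr rfl (fun i _ => (dotq_smul _ _ _).symm)

lemma combo_split {d e : ℕ} {ι : Type} [Fintype ι] (co : ι → ℚ) (f : ι → Fin d → ℚ)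
    (g : ι → Fin e → ℚ) (x : Fin d → ℝ) (z : Fin e → ℝ) :
    (∑ i, (co i : ℝ) * (dotq (f i) x + dotq (g i) z))
      = dotq (∑ i, co i • f i) x + dotq (∑ i, co i • g i) z := by
  rw [← dotq_combo, ← dotq_combo, ← Finset.sum_add_distrib]
  exact Finset.sum_congr rfl (fun i _ => by ring)

theorem fm (n : ℕ) (m : ℕ) :
    ∀ (ι : Type), Fintype ι → ∀ (a : ι → Fin m → ℚ) (b : ι → Fin n → ℚ) (s : ι → Bool),
    ∃ (κ : Type) (_ : Fintype κ) (b' : κ → Fin n → ℚ) (s' : κ → Bool),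
      ∀ u : Fin n → ℝ,
        (∃ lam : Fin m → ℝ, ∀ i, hld (s i) (dotq (a i) lam + dotq (b i) u)) ↔
        ∀ k, hld (s' k) (dotq (b' k) u) := by
  induction m with
  | zero =>
    intro ι inst a b s
    exact ⟨ι, inst, b, s, fun u =>
      ⟨fun ⟨lam, h⟩ i => by simpa [dotq] using h i,
       fun h => ⟨fun x => x.elim0, fun i => by simpa [dotq] using h i⟩⟩⟩
  | succ m ih =>
    intro ι inst a b s
    obtain ⟨κ₁, inst₁, coef, s₁, h1⟩ := fm1 ι (fun i => a i (Fin.last m)) s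
    obtain ⟨κ, instκ, b', s', h2⟩ :=
      ih κ₁ inst₁ (fun k => ∑ i, coef k i • Fin.init (a i)) (fun k => ∑ i, coef k i • b i) s₁
    refine ⟨κ, instκ, b', s', fun u => ?_⟩
    rw [← h2 u]
    constructor
    · rintro ⟨lam, h⟩
      refine ⟨Fin.init lam, fun k => ?_⟩
      have hA := (h1 (fun i => dotq (Fin.init (a i)) (Fin.init lam) + dotq (b i) u)).1
        ⟨lam (Fin.last m), fun i => by
          have e := dotq_eq_init (a i) lam
          have := h i
          rw [e, add_right_comm] at this
          exact this⟩ k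
      rw [← combo_split]
      exact hA
    · rintro ⟨lam', h⟩
      obtain ⟨y, hy⟩ := (h1 (fun i => dotq (Fin.init (a i)) lam' + dotq (b i) u)).2
        (fun k => by rw [combo_split]; exact h k)
      refine ⟨Fin.snoc lam' y, fun i => ?_⟩
      have := hy i
      rw [add_right_comm] at this
      rw [dotq_snoc]
      exact this

lemma dotq_sub {d : ℕ} (a b : Fin d → ℚ) (x : Fin d → ℝ) :
    dotq (a - b) x = dotq a x - dotq b x := by
  simp [dotq, sub_mul, Finset.sum_sub_distrib]

lemma dotq_sub_right {d : ℕ} (a : Fin d → ℚ) (x y : Fin d → ℝ) :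
    dotq a x - dotq a y = ∑ j, (a j : ℝ) * (x j - y j) := by
  simp [dotq, mul_sub, Finset.sum_sub_distrib]

lemma cast_snoc {n : ℕ} (q' : Fin n → ℚ) (qy : ℚ) :
    (fun j => ((Fin.snoc q' qy : Fin (n+1) → ℚ) j : ℝ))
      = Fin.snoc (fun j => (q' j : ℝ)) (qy : ℝ) := by
  funext j
  refine Fin.lastCases ?_ ?_ j
  · simp
  · intro jj; simp

theorem kerdense (n : ℕ) :
    ∀ (ι : Type), Fintype ι → ∀ (c : ι → Fin n → ℚ) (v : Fin n → ℝ),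
    (∀ i, dotq (c i) v = 0) → ∀ ε : ℝ, 0 < ε →
    ∃ q : Fin n → ℚ, (∀ i, dotq (c i) (fun j => (q j : ℝ)) = 0) ∧
      ∀ j, |(q j : ℝ) - v j| < ε := by
  induction n with
  | zero =>
    intro ι _ c v h ε hε
    exact ⟨fun _ => 0, fun i => by simp [dotq], fun j => j.elim0⟩
  | succ n ih =>
    intro ι inst c v hv ε hε
    set v' : Fin n → ℝ := Fin.init v with hv'def
    have hsnoc : ∀ i, dotq (c i) v
        = dotq (Fin.init (c i)) v' + ((c i (Fin.last n) : ℝ)) * v (Fin.last n) :=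
      fun i => dotq_eq_init (c i) v
    by_cases hex : ∃ i0, c i0 (Fin.last n) ≠ 0
    · obtain ⟨i0, hd⟩ := hex
      set d : ℚ := c i0 (Fin.last n) with hdd
      have hdR : (d : ℝ) ≠ 0 := by exact_mod_cast hd
      have habsd : (0:ℝ) < |(d:ℝ)| := abs_pos.mpr hdR
      set c' : ι → Fin n → ℚ :=
        fun i => Fin.init (c i) - (c i (Fin.last n) / d) • Fin.init (c i0) with hc'def
      have hinit : ∀ i, dotq (Fin.init (c i)) v' = -((c i (Fin.last n) : ℝ)) * v (Fin.last n) := by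
        intro i
        have := hv i
        rw [hsnoc i] at this
        linarith
      have hv'0 : ∀ i, dotq (c' i) v' = 0 := by
        intro i
        rw [hc'def]
        simp only
        rw [dotq_sub, dotq_smul, hinit i, hinit i0]
        push_cast
        field_simp
        rw [← hdd]
        ring
      set S : ℝ := ∑ j, |((Fin.init (c i0)) j : ℝ)| with hSdef
      have hS0 : 0 ≤ S := Finset.sum_nonneg (fun j _ => abs_nonneg _)
      set ε' : ℝ := min ε (ε * |(d:ℝ)| / (1 + S)) with hε'def
      have hε' : 0 < ε' := lt_min hε (by positivity)
      obtain ⟨q', hq'0, hq'c⟩ := ih ι inst c' v' hv'0 ε' hε'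
      set T : ℝ := dotq (Fin.init (c i0)) (fun j => (q' j : ℝ)) with hTdef
      set qy : ℚ := -(∑ j, Fin.init (c i0) j * q' j) / d with hqydef
      have hqyT : (qy : ℝ) = -T / (d : ℝ) := by
        rw [hqydef, hTdef]
        push_cast [dotq]
        ring
      have hTq : T = -((qy : ℝ) * (d : ℝ)) := by
        rw [hqyT]
        field_simp
      refine ⟨Fin.snoc q' qy, fun i => ?_, fun j => ?_⟩
      · rw [cast_snoc, dotq_snoc]
        have h0 := hq'0 i
        rw [hc'def] at h0
        simp only at h0
        rw [dotq_sub, dotq_smul] at h0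
        have e : ((c i (Fin.last n) / d : ℚ) : ℝ) = (c i (Fin.last n) : ℝ) / (d : ℝ) := by
          push_cast; ring
        rw [e, hTdef.symm] at h0
        -- h0 : dotq (init c i) q' - (cil/d) * T = 0
        rw [hTq] at h0
        field_simp at h0
        have h0' : ((dotq (Fin.init (c i)) fun j => ((q' j : ℝ)))
            + (c i (Fin.last n) : ℝ) * (qy : ℝ)) * (d : ℝ) = 0 := by
          linear_combination (d : ℝ) * h0
        rcases mul_eq_zero.mp h0' with h00 | h00
        · linarith
        · exact absurd h00 hdR
      · refine Fin.lastCases ?_ ?_ j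
        · -- last coordinate
          rw [Fin.snoc_last]
          have hvlast : v (Fin.last n) = -(dotq (Fin.init (c i0)) v') / (d : ℝ) := by
            have h := hinit i0
            rw [← hdd] at h
            rw [h]
            field_simp
          have hdiff : (qy : ℝ) - v (Fin.last n)
              = (dotq (Fin.init (c i0)) v' - T) / (d : ℝ) := by
            rw [hqyT, hvlast]
            field_simp
            ring
          have hbound : |dotq (Fin.init (c i0)) v' - T| ≤ S * ε' := by
            have : dotq (Fin.init (c i0)) v' - T
                = ∑ j, ((Fin.init (c i0)) j : ℝ) * (v' j - (q' j : ℝ)) := by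
              rw [hTdef, dotq_sub_right]
            rw [this]
            calc |∑ j, ((Fin.init (c i0)) j : ℝ) * (v' j - (q' j : ℝ))|
                ≤ ∑ j, |((Fin.init (c i0)) j : ℝ) * (v' j - (q' j : ℝ))| :=
                  Finset.abs_sum_le_sum_abs _ _
              _ ≤ ∑ j, |((Fin.init (c i0)) j : ℝ)| * ε' := by
                  refine Finset.sum_le_sum (fun j _ => ?_)
                  rw [abs_mul]
                  refine mul_le_mul_of_nonneg_left ?_ (abs_nonneg _)
                  rw [abs_sub_comm]
                  exact le_of_lt (hq'c j)
              _ = S * ε' := by rw [hSdef, Finset.sum_mul]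
          have h5 : ε * (S / (1 + S)) < ε := by
            have h4 : S / (1 + S) < 1 := by
              rw [div_lt_one (by linarith)]
              linarith
            nlinarith [div_nonneg hS0 (by linarith : (0:ℝ) ≤ 1 + S)]
          calc |(qy : ℝ) - v (Fin.last n)|
              = |dotq (Fin.init (c i0)) v' - T| / |(d:ℝ)| := by rw [hdiff, abs_div]
            _ ≤ S * ε' / |(d:ℝ)| := by gcongr
            _ ≤ S * (ε * |(d:ℝ)| / (1 + S)) / |(d:ℝ)| := by
                gcongr
                exact min_le_right _ _
            _ = ε * (S / (1 + S)) := by field_simp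
            _ < ε := h5
        · intro jj
          rw [Fin.snoc_castSucc]
          have := hq'c jj
          have : |(q' jj : ℝ) - v' jj| < ε' := this
          have hle : ε' ≤ ε := min_le_left _ _
          rw [hv'def] at this
          calc |(q' jj : ℝ) - v (jj.castSucc)| = |(q' jj : ℝ) - v' jj| := by rw [hv'def]; rfl
            _ < ε' := hq'c jj
            _ ≤ ε := hle
    · push_neg at hex
      have hv'0 : ∀ i, dotq (Fin.init (c i)) v' = 0 := by
        intro i
        have := hv i
        rw [hsnoc i, hex i] at this
        simpa using this
      obtain ⟨q', hq'0, hq'c⟩ := ih ι inst (fun i => Fin.init (c i)) v' hv'0 ε hε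
      obtain ⟨qy, hqy⟩ := exists_rat_near (v (Fin.last n)) hε
      refine ⟨Fin.snoc q' qy, fun i => ?_, fun j => ?_⟩
      · rw [cast_snoc, dotq_snoc, hex i]
        rw [hq'0 i]
        simp
      · refine Fin.lastCases ?_ ?_ j
        · rw [Fin.snoc_last, abs_sub_comm]
          exact hqy
        · intro jj
          rw [Fin.snoc_castSucc]
          exact hq'c jj

lemma subkey {n m k l : ℕ} (φA : Fin k → Fin m → ℚ) (χA : Fin k → Fin n → ℚ)
    (φB : Fin l → Fin m → ℚ) (χB : Fin l → Fin n → ℚ) (v : Fin n → ℝ)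
    (hsub : ∀ lam : Fin m → ℝ, (∀ i, -(dotq (χA i) v) ≤ dotq (φA i) lam) →
      ∀ i0, -(dotq (χB i0) v) ≤ dotq (φB i0) lam) :
    ∀ i0 : Fin l, ∃ (w : Fin n → ℚ) (sb : Bool), (¬ hld sb (dotq w v)) ∧
      ∀ u : Fin n → ℝ, ¬ hld sb (dotq w u) → ∀ lam : Fin m → ℝ,
        (∀ i, -(dotq (χA i) u) ≤ dotq (φA i) lam) → -(dotq (χB i0) u) ≤ dotq (φB i0) lam := by
  intro i0
  obtain ⟨κ, instκ, b', s', hiff⟩ := fm n m (Sum (Fin k) Unit) inferInstance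
    (Sum.elim (fun i => -(φA i)) (fun _ => φB i0))
    (Sum.elim (fun i => -(χA i)) (fun _ => χB i0))
    (Sum.elim (fun _ => true) (fun _ => false))
  have hnot : ¬ ∃ lam : Fin m → ℝ, ∀ i : Sum (Fin k) Unit,
      hld (Sum.elim (fun _ => true) (fun _ => false) i)
        (dotq (Sum.elim (fun i => -(φA i)) (fun _ => φB i0) i) lam
          + dotq (Sum.elim (fun i => -(χA i)) (fun _ => χB i0) i) v) := by
    rintro ⟨lam, hlam⟩
    have h1 : ∀ i, -(dotq (χA i) v) ≤ dotq (φA i) lam := by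
      intro i
      have := hlam (Sum.inl i)
      simp only [Sum.elim_inl, dotq_neg] at this
      have h' : -(dotq (φA i) lam) + -(dotq (χA i) v) ≤ 0 := this
      linarith
    have h2 : dotq (φB i0) lam + dotq (χB i0) v < 0 := by
      have := hlam (Sum.inr ())
      simpa [hld] using this
    have := hsub lam h1 i0
    linarith
  obtain ⟨k0, hk0⟩ := not_forall.mp (fun h => hnot ((hiff v).mpr h))
  refine ⟨b' k0, s' k0, hk0, ?_⟩
  intro u hu lam hlam
  by_contra hcon
  have hex : ∃ lam : Fin m → ℝ, ∀ i : Sum (Fin k) Unit,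
      hld (Sum.elim (fun _ => true) (fun _ => false) i)
        (dotq (Sum.elim (fun i => -(φA i)) (fun _ => φB i0) i) lam
          + dotq (Sum.elim (fun i => -(χA i)) (fun _ => χB i0) i) u) := by
    refine ⟨lam, fun i => ?_⟩
    match i with
    | Sum.inl i =>
      have := hlam i
      simp only [Sum.elim_inl, dotq_neg]
      show -(dotq (φA i) lam) + -(dotq (χA i) u) ≤ 0
      linarith
    | Sum.inr _ =>
      have : dotq (φB i0) lam < -(dotq (χB i0) u) := lt_of_not_ge hcon
      simp only [Sum.elim_inr]
      show dotq (φB i0) lam + dotq (χB i0) u < 0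
      linarith
  exact hu ((hiff u).mp hex k0)

lemma dotq_continuous {d : ℕ} (w : Fin d → ℚ) :
    Continuous (fun u : Fin d → ℝ => dotq w u) := by
  unfold dotq
  exact continuous_finset_sum _ (fun j _ => continuous_const.mul (continuous_apply j))

/-- Lemma 8.7: if two families of rational polyhedra, parameterized linearly by `v`,
coincide at some real parameter `v` where they form a full-dimensional polytope, then they
coincide at rational parameters arbitrarily close to `v`. -/
theorem stmt_1 (n m k₁ k₂ : ℕ)
    (φ1 : Fin k₁ → Fin m → ℚ) (χ1 : Fin k₁ → Fin n → ℚ)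
    (φ2 : Fin k₂ → Fin m → ℚ) (χ2 : Fin k₂ → Fin n → ℚ)
    (v : Fin n → ℝ)
    (hEq : {lam : Fin m → ℝ | ∀ i, -(∑ j, (χ1 i j : ℝ) * v j) ≤ ∑ j, (φ1 i j : ℝ) * lam j}
         = {lam : Fin m → ℝ | ∀ i, -(∑ j, (χ2 i j : ℝ) * v j) ≤ ∑ j, (φ2 i j : ℝ) * lam j})
    (hBdd : Bornology.IsBounded
      {lam : Fin m → ℝ | ∀ i, -(∑ j, (χ1 i j : ℝ) * v j) ≤ ∑ j, (φ1 i j : ℝ) * lam j})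
    (hFull : (interior
      {lam : Fin m → ℝ | ∀ i, -(∑ j, (χ1 i j : ℝ) * v j) ≤ ∑ j, (φ1 i j : ℝ) * lam j}).Nonempty) :
    ∀ O ∈ nhds v, ∃ v' : Fin n → ℚ, (fun j => (v' j : ℝ)) ∈ O ∧
      {lam : Fin m → ℝ | ∀ i, -(∑ j, (χ1 i j : ℝ) * (v' j : ℝ)) ≤ ∑ j, (φ1 i j : ℝ) * lam j}
      = {lam : Fin m → ℝ | ∀ i, -(∑ j, (χ2 i j : ℝ) * (v' j : ℝ)) ≤ ∑ j, (φ2 i j : ℝ) * lam j} := by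
  classical
  intro O hO
  have hsub12 : ∀ lam : Fin m → ℝ, (∀ i, -(dotq (χ1 i) v) ≤ dotq (φ1 i) lam) →
      ∀ i0, -(dotq (χ2 i0) v) ≤ dotq (φ2 i0) lam := by
    intro lam hlam i0
    have hmem : lam ∈ {lam : Fin m → ℝ |
        ∀ i, -(∑ j, (χ1 i j : ℝ) * v j) ≤ ∑ j, (φ1 i j : ℝ) * lam j} := hlam
    rw [hEq] at hmem
    exact hmem i0
  have hsub21 : ∀ lam : Fin m → ℝ, (∀ i, -(dotq (χ2 i) v) ≤ dotq (φ2 i) lam) →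
      ∀ i0, -(dotq (χ1 i0) v) ≤ dotq (φ1 i0) lam := by
    intro lam hlam i0
    have hmem : lam ∈ {lam : Fin m → ℝ |
        ∀ i, -(∑ j, (χ2 i j : ℝ) * v j) ≤ ∑ j, (φ2 i j : ℝ) * lam j} := hlam
    rw [← hEq] at hmem
    exact hmem i0
  choose w1 sb1 hv1 himp1 using subkey φ1 χ1 φ2 χ2 v hsub12
  choose w2 sb2 hv2 himp2 using subkey φ2 χ2 φ1 χ1 v hsub21
  set W : Sum (Fin k₂) (Fin k₁) → Fin n → ℚ := Sum.elim w1 w2 with hWdef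
  set SB : Sum (Fin k₂) (Fin k₁) → Bool := Sum.elim sb1 sb2 with hSBdef
  have hVnh : ∀ t, ¬ hld (SB t) (dotq (W t) v) := by
    rintro (t | t)
    · exact hv1 t
    · exact hv2 t
  -- the open neighborhood
  set N : Set (Fin n → ℝ) :=
    O ∩ ⋂ (t : Sum (Fin k₂) (Fin k₁)), ⋂ (_ : 0 < dotq (W t) v), {u | 0 < dotq (W t) u}
    with hNdef
  have hN : N ∈ nhds v := by
    refine Filter.inter_mem hO ?_
    refine Filter.iInter_mem.mpr (fun t => ?_)
    by_cases hp : 0 < dotq (W t) v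
    · have he : (⋂ (_ : 0 < dotq (W t) v), {u : Fin n → ℝ | 0 < dotq (W t) u})
          = {u : Fin n → ℝ | 0 < dotq (W t) u} := by simp [hp]
      rw [he]
      exact (isOpen_lt continuous_const (dotq_continuous (W t))).mem_nhds hp
    · have he : (⋂ (_ : 0 < dotq (W t) v), {u : Fin n → ℝ | 0 < dotq (W t) u})
          = Set.univ := by simp [hp]
      rw [he]
      exact Filter.univ_mem
  obtain ⟨ε, hε, hball⟩ := Metric.mem_nhds_iff.mp hN
  obtain ⟨q, hq0, hqc⟩ := kerdense n {t : Sum (Fin k₂) (Fin k₁) // dotq (W t) v = 0}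
    inferInstance (fun t => W t.1) v (fun t => t.2) ε hε
  have hqball : (fun j => (q j : ℝ)) ∈ Metric.ball v ε := by
    rw [Metric.mem_ball, dist_pi_lt_iff hε]
    intro j
    rw [Real.dist_eq]
    exact hqc j
  have hqN := hball hqball
  have hts : ∀ t, ¬ hld (SB t) (dotq (W t) (fun j => (q j : ℝ))) := by
    intro t
    by_cases h0 : dotq (W t) v = 0
    · have hz : dotq (W t) (fun j => (q j : ℝ)) = 0 := hq0 ⟨t, h0⟩
      have hsb : SB t = false := by
        cases hsb : SB t
        · rfl
        · exfalso
          apply hVnh t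
          rw [hsb, h0]
          exact le_refl 0
      rw [hsb, hz]
      exact lt_irrefl 0
    · have hpos : 0 < dotq (W t) v := by
        have hn := hVnh t
        cases hsb : SB t
        · rw [hsb] at hn
          exact lt_of_le_of_ne (not_lt.mp hn) (Ne.symm h0)
        · rw [hsb] at hn
          exact not_le.mp hn
      have hq' : 0 < dotq (W t) (fun j => (q j : ℝ)) := by
        have h2 := hqN.2
        have h3 := Set.mem_iInter.mp h2 t
        have h4 := Set.mem_iInter.mp h3 hpos
        exact h4
      cases hsb : SB t
      · intro hc
        exact absurd (hld_false.mp hc) (not_lt.mpr (le_of_lt hq'))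
      · intro hc
        exact absurd (hld_true.mp hc) (not_le.mpr hq')
  refine ⟨q, hqN.1, ?_⟩
  apply Set.eq_of_subset_of_subset
  · intro lam hlam
    intro i0
    exact himp1 i0 (fun j => (q j : ℝ)) (hts (Sum.inl i0)) lam hlam
  · intro lam hlam
    intro i0
    exact himp2 i0 (fun j => (q j : ℝ)) (hts (Sum.inr i0)) lam hlam
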